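/- arXiv:1407.5525 — 2 statements merged into one kernel-verified Lean document; each statement's English description precedes it below -/
import Mathlib

section
/- For every integer d ≥ 2, the set 𝒮'_d is convex: if A, B ∈ 𝒮'_d and t ∈ [0,1], then tA + (1−t)B ∈ 𝒮'_d. In particular, a convex combination of two rank-(d−1) positive semidefinite symmetric matrices with zero row sums and nonpositive off-diagonal entries again has rank d−1. (Convexity assertion of Corollary 1.) -/
open Matrix

/-- The set `𝒮'_d`: rank `d-1`, symmetric, positive semidefinite, zero row sums,
nonpositive off-diagonal entries. -/
def GraphLaplacianSet' (d : ℕ) : Set (Matrix (Fin d) (Fin d) ℝ) :=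
  {A | A.rank = d - 1 ∧ A.IsSymm ∧ A.PosSemidef ∧ (∀ i, ∑ j, A i j = 0) ∧
    ∀ i j, i ≠ j → A i j ≤ 0}

lemma rank_nullity_mat {d : ℕ} (M : Matrix (Fin d) (Fin d) ℝ) :
    M.rank + Module.finrank ℝ (LinearMap.ker M.mulVecLin) = d := by
  have := LinearMap.finrank_range_add_finrank_ker M.mulVecLin
  simpa [Matrix.rank, Module.finrank_fintype_fun_eq_card] using this

lemma rank_aux {d : ℕ} (hd : 2 ≤ d) (C M : Matrix (Fin d) (Fin d) ℝ)
    (hM : M.rank = d - 1)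
    (hker : LinearMap.ker C.mulVecLin ≤ LinearMap.ker M.mulVecLin)
    (hones : C *ᵥ (fun _ => (1:ℝ)) = 0) : C.rank = d - 1 := by
  have hMk : Module.finrank ℝ (LinearMap.ker M.mulVecLin) = 1 := by
    have h1 := rank_nullity_mat M
    omega
  have hle : Module.finrank ℝ (LinearMap.ker C.mulVecLin) ≤ 1 := by
    rw [← hMk]
    exact Submodule.finrank_mono hker
  have hpos : 0 < Module.finrank ℝ (LinearMap.ker C.mulVecLin) := by
    rw [Module.finrank_pos_iff_exists_ne_zero]
    refine ⟨⟨fun _ => 1, ?_⟩, ?_⟩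
    · simpa [LinearMap.mem_ker, Matrix.mulVecLin_apply] using hones
    · intro h
      have h0 : (fun _ : Fin d => (1:ℝ)) = 0 := congrArg Subtype.val h
      have := congrFun h0 ⟨0, by omega⟩
      norm_num at this
  have hCk : Module.finrank ℝ (LinearMap.ker C.mulVecLin) = 1 := le_antisymm hle hpos
  have h2 := rank_nullity_mat C
  omega

/-- Convexity assertion of Corollary 1: `𝒮'_d` is convex; in particular a convex
combination of two of its elements again has rank `d-1`. -/
theorem graphLaplacianSet'_convex (d : ℕ) (hd : 2 ≤ d)
    (A B : Matrix (Fin d) (Fin d) ℝ)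
    (hA : A ∈ GraphLaplacianSet' d) (hB : B ∈ GraphLaplacianSet' d)
    (t : ℝ) (ht : t ∈ Set.Icc (0 : ℝ) 1) :
    t • A + (1 - t) • B ∈ GraphLaplacianSet' d ∧
      (t • A + (1 - t) • B).rank = d - 1 := by
  obtain ⟨hAr, hAs, hAp, hArow, hAoff⟩ := hA
  obtain ⟨hBr, hBs, hBp, hBrow, hBoff⟩ := hB
  obtain ⟨ht0, ht1⟩ := ht
  set C := t • A + (1 - t) • B with hC
  -- quadratic form decomposition
  have hquad : ∀ x : Fin d → ℝ,
      x ⬝ᵥ C *ᵥ x = t * (x ⬝ᵥ A *ᵥ x) + (1 - t) * (x ⬝ᵥ B *ᵥ x) := by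
    intro x
    simp [hC, add_mulVec, smul_mulVec, dotProduct_add, dotProduct_smul,
      smul_eq_mul]
  have hAq : ∀ x : Fin d → ℝ, 0 ≤ x ⬝ᵥ A *ᵥ x := by
    intro x; simpa [star_trivial] using hAp.dotProduct_mulVec_nonneg x
  have hBq : ∀ x : Fin d → ℝ, 0 ≤ x ⬝ᵥ B *ᵥ x := by
    intro x; simpa [star_trivial] using hBp.dotProduct_mulVec_nonneg x
  -- positive semidefiniteness
  have hCp : C.PosSemidef := by
    refine Matrix.PosSemidef.of_dotProduct_mulVec_nonneg ?_ (fun x => ?_)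
    · have h1 : (t • A)ᴴ = t • A := by
        rw [conjTranspose_smul, hAp.1]; simp [star_trivial]
      have h2 : ((1 - t) • B)ᴴ = (1 - t) • B := by
        rw [conjTranspose_smul, hBp.1]; simp [star_trivial]
      show Cᴴ = C
      rw [hC, conjTranspose_add, h1, h2]
    have := hquad x
    simp only [star_trivial] at *
    rw [this]
    have := hAq x; have := hBq x
    nlinarith
  -- symmetry
  have hCs : C.IsSymm := by
    unfold Matrix.IsSymm at *
    simp [hC, transpose_add, transpose_smul, hAs, hBs]
  -- row sums
  have hCrow : ∀ i, ∑ j, C i j = 0 := by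
    intro i
    simp only [hC, Matrix.add_apply, Matrix.smul_apply, smul_eq_mul,
      Finset.sum_add_distrib, ← Finset.mul_sum, hArow i, hBrow i]
    ring
  -- off-diagonal
  have hCoff : ∀ i j, i ≠ j → C i j ≤ 0 := by
    intro i j hij
    have h1 := hAoff i j hij
    have h2 := hBoff i j hij
    simp only [hC, Matrix.add_apply, Matrix.smul_apply, smul_eq_mul]
    nlinarith
  -- ones vector is in the kernel
  have hones : C *ᵥ (fun _ => (1:ℝ)) = 0 := by
    funext i
    simp [Matrix.mulVec, dotProduct, hCrow i]
  -- rank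
  have hCr : C.rank = d - 1 := by
    rcases lt_or_eq_of_le ht0 with htpos | hteq
    · -- t > 0 : kernel of C contained in kernel of A
      refine rank_aux hd C A hAr ?_ hones
      intro x hx
      simp only [LinearMap.mem_ker, Matrix.mulVecLin_apply] at hx ⊢
      have hq : x ⬝ᵥ C *ᵥ x = 0 := by rw [hx, dotProduct_zero]
      rw [hquad x] at hq
      have ha := hAq x; have hb := hBq x
      have haz : x ⬝ᵥ A *ᵥ x = 0 := by nlinarith
      have := (hAp.dotProduct_mulVec_zero_iff x).mp (by simpa [star_trivial] using haz)
      exact this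
    · -- t = 0 : C = B
      have : C = B := by simp [hC, ← hteq]
      rw [this]; exact hBr
  exact ⟨⟨hCr, hCs, hCp, hCrow, hCoff⟩, hCr⟩
end

section
/- Let d ≥ 2 and let A be a symmetric d×d real matrix with rank(A) = d−1 whose rows each sum to 0. Then for every index i, the (d−1)×(d−1) matrix obtained from A by deleting its i-th row and i-th column is invertible. (Nonsingular-block claim from the proofs of Theorems 1 and 2.) -/
open Matrix

/-- The embedding `Fin (d-1) → Fin d` skipping the index `i`. -/
def skipIdx {d : ℕ} (i : Fin d) (j : Fin (d - 1)) : Fin d :=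
  if (j : ℕ) < (i : ℕ) then ⟨j, by omega⟩ else ⟨(j : ℕ) + 1, by omega⟩

lemma skipIdx_val {d : ℕ} (i : Fin d) (j : Fin (d-1)) :
    ((skipIdx i j : Fin d) : ℕ) = if (j:ℕ) < (i:ℕ) then (j:ℕ) else (j:ℕ)+1 := by
  unfold skipIdx; split <;> rfl

lemma skipIdx_ne {d : ℕ} (i : Fin d) (j : Fin (d-1)) : skipIdx i j ≠ i := by
  have h := skipIdx_val i j
  intro hh; rw [hh] at h; split at h <;> omega

lemma skipIdx_inj {d : ℕ} (i : Fin d) : Function.Injective (skipIdx i) := by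
  intro a b h
  have ha := skipIdx_val i a; have hb := skipIdx_val i b
  have hv : ((skipIdx i a : Fin d) : ℕ) = ((skipIdx i b : Fin d) : ℕ) := by rw [h]
  rw [ha, hb] at hv
  apply Fin.ext
  split at hv <;> split at hv <;> omega

/-- Inverse of `skipIdx` on the complement of `i`. -/
def unskip {d : ℕ} (i j : Fin d) (h : (j:ℕ) ≠ (i:ℕ)) : Fin (d-1) :=
  if hlt : (j:ℕ) < (i:ℕ) then ⟨(j:ℕ), by have := i.isLt; omega⟩
  else ⟨(j:ℕ) - 1, by have := j.isLt; omega⟩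

lemma unskip_val {d : ℕ} (i j : Fin d) (h : (j:ℕ) ≠ (i:ℕ)) :
    ((unskip i j h : Fin (d-1)) : ℕ) = if (j:ℕ) < (i:ℕ) then (j:ℕ) else (j:ℕ) - 1 := by
  unfold unskip; by_cases hlt : (j:ℕ) < (i:ℕ) <;> simp [hlt]

lemma skipIdx_unskip {d : ℕ} (i j : Fin d) (h : (j:ℕ) ≠ (i:ℕ)) :
    skipIdx i (unskip i j h) = j := by
  apply Fin.ext
  rw [skipIdx_val, unskip_val]
  split_ifs <;> omega

lemma unskip_skipIdx {d : ℕ} (i : Fin d) (m : Fin (d-1)) (h : ((skipIdx i m : Fin d):ℕ) ≠ (i:ℕ)) :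
    unskip i (skipIdx i m) h = m := by
  apply Fin.ext
  rw [unskip_val, skipIdx_val]
  split_ifs <;> omega

lemma image_skipIdx {d : ℕ} (i : Fin d) :
    Finset.image (skipIdx i) Finset.univ = Finset.univ.erase i := by
  apply Finset.eq_of_subset_of_card_le
  · intro j hj
    simp only [Finset.mem_image] at hj
    obtain ⟨m, _, rfl⟩ := hj
    exact Finset.mem_erase.mpr ⟨skipIdx_ne i m, Finset.mem_univ _⟩
  · rw [Finset.card_erase_of_mem (Finset.mem_univ i),
      Finset.card_image_of_injective _ (skipIdx_inj i)]
    simp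

lemma sum_skip {d : ℕ} (i : Fin d) (F : Fin d → ℝ) :
    ∑ k, F k = F i + ∑ m : Fin (d-1), F (skipIdx i m) := by
  rw [← Finset.sum_erase_add _ _ (Finset.mem_univ i), add_comm]
  congr 1
  rw [← image_skipIdx i, Finset.sum_image (fun a _ b _ h => skipIdx_inj i h)]

/-- Nonsingular-block claim from the proofs of Theorems 1 and 2: if `A` is a
symmetric `d × d` real matrix of rank `d-1` with zero row sums, then the
`(d-1) × (d-1)` matrix obtained by deleting the `i`-th row and column of `A`
is invertible, for every `i`. -/
theorem principalSubmatrix_isUnit (d : ℕ) (hd : 2 ≤ d)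
    (A : Matrix (Fin d) (Fin d) ℝ) (hsym : A.IsSymm)
    (hrank : A.rank = d - 1) (hrow : ∀ i, ∑ j, A i j = 0) (i : Fin d) :
    IsUnit (A.submatrix (skipIdx i) (skipIdx i)) := by
  set B := A.submatrix (skipIdx i) (skipIdx i) with hB
  -- column sums vanish
  have hcol : ∀ k, ∑ j, A j k = 0 := by
    intro k
    have : ∀ j, A j k = A k j := fun j => (Matrix.IsSymm.apply hsym j k).symm ▸ rfl
    calc ∑ j, A j k = ∑ j, A k j := by
          refine Finset.sum_congr rfl fun j _ => ?_
          exact hsym.apply k j ▸ rfl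
      _ = 0 := hrow k
  -- the kernel of A is spanned by the all-ones vector
  have hones : (fun _ : Fin d => (1:ℝ)) ∈ LinearMap.ker A.mulVecLin := by
    rw [LinearMap.mem_ker]
    funext j
    simp [Matrix.mulVecLin, Matrix.mulVec, dotProduct, hrow j]
  have hones_ne : (fun _ : Fin d => (1:ℝ)) ≠ 0 := by
    intro h
    have := congrFun h ⟨0, by omega⟩
    simp at this
  have hkerdim : Module.finrank ℝ (LinearMap.ker A.mulVecLin) = 1 := by
    have h1 := LinearMap.finrank_range_add_finrank_ker A.mulVecLin
    have h2 : Module.finrank ℝ (Fin d → ℝ) = d := by simp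
    have h3 : Module.finrank ℝ (LinearMap.range A.mulVecLin) = d - 1 := by
      rw [← hrank]; rfl
    omega
  have hker : LinearMap.ker A.mulVecLin = Submodule.span ℝ {(fun _ : Fin d => (1:ℝ))} := by
    symm
    apply Submodule.eq_of_le_of_finrank_eq
    · rw [Submodule.span_singleton_le_iff_mem]; exact hones
    · rw [finrank_span_singleton hones_ne, hkerdim]
  -- prove det B ≠ 0
  rw [Matrix.isUnit_iff_isUnit_det, isUnit_iff_ne_zero]
  intro hdet
  obtain ⟨x, hx_ne, hx⟩ := (Matrix.exists_mulVec_eq_zero_iff).mpr hdet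
  -- extend x by zero at position i
  set y : Fin d → ℝ := fun j => if h : (j:ℕ) = (i:ℕ) then 0 else x (unskip i j h) with hy
  have hyi : y i = 0 := by simp [hy]
  have hyskip : ∀ m, y (skipIdx i m) = x m := by
    intro m
    have hne : ((skipIdx i m : Fin d):ℕ) ≠ (i:ℕ) := fun h => skipIdx_ne i m (Fin.ext h)
    simp only [hy, dif_neg hne, unskip_skipIdx]
  -- A.mulVec y vanishes away from i
  have hAy_skip : ∀ m, A.mulVec y (skipIdx i m) = 0 := by
    intro m
    have : A.mulVec y (skipIdx i m) = ∑ k, A (skipIdx i m) k * y k := rfl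
    rw [this, sum_skip i (fun k => A (skipIdx i m) k * y k), hyi, mul_zero, zero_add]
    have : ∑ m' : Fin (d-1), A (skipIdx i m) (skipIdx i m') * y (skipIdx i m')
        = B.mulVec x m := by
      refine Finset.sum_congr rfl fun m' _ => ?_
      rw [hyskip m']; rfl
    rw [this, hx]; rfl
  -- total sum of A.mulVec y is zero, so the i-th entry is zero too
  have hAyi : A.mulVec y i = 0 := by
    have htot : ∑ j, A.mulVec y j = 0 := by
      have : ∑ j, A.mulVec y j = ∑ j, ∑ k, A j k * y k := rfl
      rw [this, Finset.sum_comm]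
      have : ∀ k : Fin d, ∑ j, A j k * y k = 0 := by
        intro k
        rw [← Finset.sum_mul, hcol k, zero_mul]
      simp [this]
    rw [sum_skip i (A.mulVec y)] at htot
    simpa [hAy_skip] using htot
  have hAy : A.mulVec y = 0 := by
    funext j
    by_cases h : (j:ℕ) = (i:ℕ)
    · rw [show j = i from Fin.ext h]; exact hAyi
    · rw [← skipIdx_unskip i j h]; exact hAy_skip _
  -- hence y is a multiple of the all-ones vector, but y i = 0 forces y = 0
  have hymem : y ∈ LinearMap.ker A.mulVecLin := by
    rw [LinearMap.mem_ker]; exact hAy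
  rw [hker, Submodule.mem_span_singleton] at hymem
  obtain ⟨t, ht⟩ := hymem
  have ht0 : t = 0 := by
    have := congrFun ht i
    rw [hyi] at this
    simpa using this
  have hy0 : y = 0 := by rw [← ht, ht0, zero_smul]
  apply hx_ne
  funext m
  have := hyskip m
  rw [hy0] at this
  exact this.symm
end
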